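/- For commuting density matrices (i.e., classical probability distributions W(·|x) on a finite output alphabet Y): for fixed ρ ≥ 0 and probability distribution P on a finite alphabet X, min over probability distributions Q on Y of [−(1+ρ) Σ_x P(x) log Σ_y W(y|x)^{1/(1+ρ)} Q(y)^{ρ/(1+ρ)}] equals min over channels V : X → distributions on Y of [D(V‖W|P) + ρ·I(P,V)], where D(V‖W|P) = Σ_{x,y} P(x)V(y|x) log(V(y|x)/W(y|x)) and I(P,V) is the mutual information. -/

import Mathlib

open Finset

variable {X Y : Type*} [Fintype X] [Fintype Y]

/-- A probability distribution on a finite set. -/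
def IsProb {Z : Type*} [Fintype Z] (P : Z → ℝ) : Prop :=
  (∀ z, 0 ≤ P z) ∧ ∑ z, P z = 1

/-- A channel (stochastic matrix) from `X` to `Y`. -/
def IsChannel (V : X → Y → ℝ) : Prop :=
  ∀ x, IsProb (V x)

/-- Conditional Kullback–Leibler divergence `D(V‖W|P)`. -/
noncomputable def condKL (P : X → ℝ) (V W : X → Y → ℝ) : ℝ :=
  ∑ x, ∑ y, P x * V x y * Real.log (V x y / W x y)

/-- Mutual information `I(P,V)`. -/
noncomputable def mutInf (P : X → ℝ) (V : X → Y → ℝ) : ℝ :=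
  ∑ x, ∑ y, P x * V x y * Real.log (V x y / ∑ x', P x' * V x' y)


/-- Gibbs / log-sum inequality. -/
lemma gibbs {Z : Type*} [Fintype Z] (v b : Z → ℝ) (hv : ∀ z, 0 ≤ v z)
    (hv1 : ∑ z, v z = 1) (hb : ∀ z, 0 ≤ b z) (hvb : ∀ z, b z = 0 → v z = 0)
    (hS : 0 < ∑ z, b z) :
    -Real.log (∑ z, b z) ≤ ∑ z, v z * Real.log (v z / b z) := by
  set S := ∑ z, b z with hSdef
  have key : ∀ z, v z - b z / S ≤ v z * Real.log (v z / b z) + v z * Real.log S := by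
    intro z
    rcases (hv z).eq_or_lt with h0 | hpos
    · rw [← h0]
      simp only [zero_sub, zero_mul, add_zero, neg_nonpos]
      exact div_nonneg (hb z) hS.le
    · have hbz : 0 < b z := by
        rcases (hb z).eq_or_lt with h | h
        · exact absurd (hvb z h.symm) (by linarith)
        · exact h
      have hmul : v z * Real.log (v z / b z) + v z * Real.log S
          = v z * Real.log (v z * S / b z) := by
        rw [← mul_add, ← Real.log_mul (by positivity) hS.ne']
        congr 2
        field_simp
      rw [hmul]
      have hx : 0 < b z / (v z * S) := by positivity
      have hlog := Real.log_le_sub_one_of_pos hx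
      have hinv : Real.log (v z * S / b z) = -Real.log (b z / (v z * S)) := by
        rw [← Real.log_inv]
        congr 1
        field_simp
      rw [hinv]
      have h2 : v z * (b z / (v z * S)) = b z / S := by field_simp
      nlinarith [hpos, hlog]
  have hsum := Finset.sum_le_sum (fun z (_ : z ∈ Finset.univ) => key z)
  rw [Finset.sum_sub_distrib, ← Finset.sum_div, hv1, ← hSdef, div_self hS.ne',
      Finset.sum_add_distrib, ← Finset.sum_mul, hv1, one_mul] at hsum
  linarith

/-- Key per-term algebraic identity. -/
lemma log_split (ρ v w q : ℝ) (hρ : 0 ≤ ρ) (hv : 0 ≤ v) (hw : 0 < w) (hq : 0 ≤ q)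
    (hvq : 0 < v → (ρ = 0 ∨ 0 < q)) :
    v * Real.log (v / w) + ρ * (v * Real.log (v / q)) =
      (1 + ρ) * (v * Real.log (v / (w ^ (1/(1+ρ)) * q ^ (ρ/(1+ρ))))) := by
  have h1ρ : (0:ℝ) < 1 + ρ := by linarith
  rcases hv.eq_or_lt with h0 | hvpos
  · rw [← h0]; ring
  · rcases hvq hvpos with hρ0 | hqpos
    · subst hρ0
      norm_num
    · have hb : 0 < w ^ (1/(1+ρ)) * q ^ (ρ/(1+ρ)) := by positivity
      have hwα : (0:ℝ) < w ^ (1/(1+ρ)) := Real.rpow_pos_of_pos hw _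
      have hqβ : (0:ℝ) < q ^ (ρ/(1+ρ)) := Real.rpow_pos_of_pos hqpos _
      rw [Real.log_div hvpos.ne' hw.ne', Real.log_div hvpos.ne' hqpos.ne',
          Real.log_div hvpos.ne' hb.ne',
          Real.log_mul hwα.ne' hqβ.ne',
          Real.log_rpow hw, Real.log_rpow hqpos]
      field_simp
      ring

lemma uniform_isProb {Z : Type*} [Fintype Z] [Nonempty Z] :
    IsProb (fun _ : Z => (Fintype.card Z : ℝ)⁻¹) := by
  constructor
  · intro z; positivity
  · rw [Finset.sum_const, Finset.card_univ, nsmul_eq_mul,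
      mul_inv_cancel₀ (by exact_mod_cast Fintype.card_ne_zero)]

noncomputable def Fobj (W : X → Y → ℝ) (P : X → ℝ) (ρ : ℝ) (Q : Y → ℝ) : ℝ :=
  -(1 + ρ) * ∑ x, P x * Real.log (∑ y, W x y ^ (1 / (1 + ρ)) * Q y ^ (ρ / (1 + ρ)))

noncomputable def GobjQ (P : X → ℝ) (W : X → Y → ℝ) (ρ : ℝ) (V : X → Y → ℝ) (Q : Y → ℝ) : ℝ :=
  condKL P V W + ρ * ∑ x, ∑ y, P x * V x y * Real.log (V x y / Q y)

lemma Fobj_alt (W : X → Y → ℝ) (P : X → ℝ) (ρ : ℝ) (Q : Y → ℝ) :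
    Fobj W P ρ Q = ∑ x, P x * ((1+ρ) *
      (-Real.log (∑ y, W x y ^ (1/(1+ρ)) * Q y ^ (ρ/(1+ρ))))) := by
  unfold Fobj
  rw [Finset.mul_sum]
  exact Finset.sum_congr rfl fun x _ => by ring

lemma GobjQ_eq (P : X → ℝ) (W : X → Y → ℝ) (ρ : ℝ) (V : X → Y → ℝ) (Q : Y → ℝ)
    (hρ : 0 ≤ ρ) (hWpos : ∀ x y, 0 < W x y) (hVnn : ∀ x y, 0 ≤ V x y)
    (hQnn : ∀ y, 0 ≤ Q y)
    (hvq : ∀ x y, P x ≠ 0 → 0 < V x y → (ρ = 0 ∨ 0 < Q y)) :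
    GobjQ P W ρ V Q = ∑ x, P x * ((1+ρ) *
      ∑ y, V x y * Real.log (V x y / (W x y ^ (1/(1+ρ)) * Q y ^ (ρ/(1+ρ))))) := by
  unfold GobjQ condKL
  simp only [Finset.mul_sum]
  rw [← Finset.sum_add_distrib]
  refine Finset.sum_congr rfl fun x _ => ?_
  rw [← Finset.sum_add_distrib]
  refine Finset.sum_congr rfl fun y _ => ?_
  by_cases hPx : P x = 0
  · simp [hPx]
  · have := log_split ρ (V x y) (W x y) (Q y) hρ (hVnn x y) (hWpos x y) (hQnn y)
      (hvq x y hPx)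
    linear_combination (P x) * this

lemma Fobj_nonneg (W : X → Y → ℝ) (hW : IsChannel W) (P : X → ℝ) (hP : IsProb P)
    (ρ : ℝ) (hρ : 0 ≤ ρ) (Q : Y → ℝ) (hQ : IsProb Q) : 0 ≤ Fobj W P ρ Q := by
  have h1ρ : (0:ℝ) < 1 + ρ := by linarith
  have hαβ : 1/(1+ρ) + ρ/(1+ρ) = 1 := by field_simp
  have hlog : ∀ x, Real.log (∑ y, W x y ^ (1/(1+ρ)) * Q y ^ (ρ/(1+ρ))) ≤ 0 := by
    intro x
    apply Real.log_nonpos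
    · apply Finset.sum_nonneg; intro y _
      exact mul_nonneg (Real.rpow_nonneg ((hW x).1 y) _) (Real.rpow_nonneg (hQ.1 y) _)
    · calc ∑ y, W x y ^ (1/(1+ρ)) * Q y ^ (ρ/(1+ρ))
          ≤ ∑ y, ((1/(1+ρ)) * W x y + (ρ/(1+ρ)) * Q y) :=
            Finset.sum_le_sum fun y _ => Real.geom_mean_le_arith_mean2_weighted
              (by positivity) (by positivity) ((hW x).1 y) (hQ.1 y) hαβ
        _ = 1 := by
            rw [Finset.sum_add_distrib, ← Finset.mul_sum, ← Finset.mul_sum,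
              (hW x).2, hQ.2, mul_one, mul_one, hαβ]
  have hs : ∑ x, P x * Real.log (∑ y, W x y ^ (1/(1+ρ)) * Q y ^ (ρ/(1+ρ))) ≤ 0 :=
    Finset.sum_nonpos fun x _ => mul_nonpos_of_nonneg_of_nonpos (hP.1 x) (hlog x)
  unfold Fobj
  nlinarith [hs, h1ρ]

lemma dir1 (W : X → Y → ℝ) (hW : IsChannel W) (hWpos : ∀ x y, 0 < W x y)
    (P : X → ℝ) (hP : IsProb P) (ρ : ℝ) (hρ : 0 ≤ ρ)
    (V : X → Y → ℝ) (hV : IsChannel V) :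
    ∃ Q, IsProb Q ∧ Fobj W P ρ Q ≤ condKL P V W + ρ * mutInf P V := by
  have h1ρ : (0:ℝ) < 1 + ρ := by linarith
  set Q : Y → ℝ := fun y => ∑ x, P x * V x y with hQdef
  have hQval : ∀ y, Q y = ∑ x, P x * V x y := fun y => rfl
  have hQnn : ∀ y, 0 ≤ Q y := fun y =>
    Finset.sum_nonneg fun x _ => mul_nonneg (hP.1 x) ((hV x).1 y)
  have hQ1 : ∑ y, Q y = 1 := by
    have h1 : ∀ x, ∑ y, P x * V x y = P x := fun x => by
      rw [← Finset.mul_sum, (hV x).2, mul_one]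
    calc ∑ y, Q y = ∑ x, ∑ y, P x * V x y := Finset.sum_comm
      _ = ∑ x, P x := Finset.sum_congr rfl fun x _ => h1 x
      _ = 1 := hP.2
  have hvq : ∀ x y, P x ≠ 0 → 0 < V x y → (ρ = 0 ∨ 0 < Q y) := by
    intro x y hPx hVxy
    right
    have hPxpos : 0 < P x := (hP.1 x).lt_of_ne (Ne.symm hPx)
    have hle : P x * V x y ≤ Q y := by
      rw [hQval]
      exact Finset.single_le_sum
        (fun i (_ : i ∈ Finset.univ) => mul_nonneg (hP.1 i) ((hV i).1 y))
        (Finset.mem_univ x)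
    nlinarith
  refine ⟨Q, ⟨hQnn, hQ1⟩, ?_⟩
  have hGobj : condKL P V W + ρ * mutInf P V = GobjQ P W ρ V Q := rfl
  rw [hGobj, GobjQ_eq P W ρ V Q hρ hWpos (fun x y => (hV x).1 y) hQnn hvq, Fobj_alt]
  apply Finset.sum_le_sum
  intro x _
  rcases (hP.1 x).eq_or_lt with hPx | hPx
  · rw [← hPx]; simp
  · apply mul_le_mul_of_nonneg_left ?_ hPx.le
    apply mul_le_mul_of_nonneg_left ?_ h1ρ.le
    apply gibbs (fun y => V x y) (fun y => W x y ^ (1/(1+ρ)) * Q y ^ (ρ/(1+ρ)))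
      ((hV x).1) ((hV x).2)
      (fun y => mul_nonneg (Real.rpow_nonneg (hWpos x y).le _) (Real.rpow_nonneg (hQnn y) _))
    · -- b y = 0 → V x y = 0
      intro y hby
      have hQy : Q y = 0 := by
        by_contra h
        have hq : 0 < Q y := (hQnn y).lt_of_ne (Ne.symm h)
        have hw := hWpos x y
        have : 0 < W x y ^ (1/(1+ρ)) * Q y ^ (ρ/(1+ρ)) := by positivity
        exact absurd hby this.ne'
      have hsum0 : ∑ x', P x' * V x' y = 0 := by rw [← hQval]; exact hQy
      have h0 := (Finset.sum_eq_zero_iff_of_nonneg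
        (fun i (_ : i ∈ Finset.univ) => mul_nonneg (hP.1 i) ((hV i).1 y))).1 hsum0 x
        (Finset.mem_univ x)
      rcases mul_eq_zero.1 h0 with h | h
      · exact absurd h hPx.ne'
      · exact h
    · -- 0 < ∑ b
      obtain ⟨y0, _, hy0⟩ := Finset.exists_ne_zero_of_sum_ne_zero
        (by rw [hQ1]; norm_num : ∑ y, Q y ≠ 0)
      have hQy0 : 0 < Q y0 := (hQnn y0).lt_of_ne (Ne.symm hy0)
      exact Finset.sum_pos'
        (fun y _ => mul_nonneg (Real.rpow_nonneg (hWpos x y).le _) (Real.rpow_nonneg (hQnn y) _))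
        ⟨y0, Finset.mem_univ y0,
          mul_pos (Real.rpow_pos_of_pos (hWpos x y0) _) (Real.rpow_pos_of_pos hQy0 _)⟩

lemma dir2 (W : X → Y → ℝ) (hW : IsChannel W) (hWpos : ∀ x y, 0 < W x y)
    (P : X → ℝ) (hP : IsProb P) (ρ : ℝ) (hρ : 0 ≤ ρ)
    (Q : Y → ℝ) (hQ : IsProb Q) :
    ∃ V, IsChannel V ∧ condKL P V W + ρ * mutInf P V ≤ Fobj W P ρ Q := by
  have h1ρ : (0:ℝ) < 1 + ρ := by linarith
  obtain ⟨y0, _, hy0⟩ := Finset.exists_ne_zero_of_sum_ne_zero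
    (by rw [hQ.2]; norm_num : ∑ y, Q y ≠ 0)
  have hQy0 : 0 < Q y0 := (hQ.1 y0).lt_of_ne (Ne.symm hy0)
  have hbnn : ∀ x y, 0 ≤ W x y ^ (1/(1+ρ)) * Q y ^ (ρ/(1+ρ)) := fun x y =>
    mul_nonneg (Real.rpow_nonneg (hWpos x y).le _) (Real.rpow_nonneg (hQ.1 y) _)
  have hZpos : ∀ x, 0 < ∑ y, W x y ^ (1/(1+ρ)) * Q y ^ (ρ/(1+ρ)) := fun x =>
    Finset.sum_pos' (fun y _ => hbnn x y)
      ⟨y0, Finset.mem_univ y0,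
        mul_pos (Real.rpow_pos_of_pos (hWpos x y0) _) (Real.rpow_pos_of_pos hQy0 _)⟩
  set V : X → Y → ℝ := fun x y =>
    (W x y ^ (1/(1+ρ)) * Q y ^ (ρ/(1+ρ))) /
      (∑ y', W x y' ^ (1/(1+ρ)) * Q y' ^ (ρ/(1+ρ))) with hVdef
  have hVval : ∀ x y, V x y = (W x y ^ (1/(1+ρ)) * Q y ^ (ρ/(1+ρ))) /
      (∑ y', W x y' ^ (1/(1+ρ)) * Q y' ^ (ρ/(1+ρ))) := fun x y => rfl
  have hVnn : ∀ x y, 0 ≤ V x y := fun x y => div_nonneg (hbnn x y) (hZpos x).le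
  have hVsum : ∀ x, ∑ y, V x y = 1 := by
    intro x
    have : ∑ y, V x y = (∑ y, W x y ^ (1/(1+ρ)) * Q y ^ (ρ/(1+ρ))) /
        (∑ y', W x y' ^ (1/(1+ρ)) * Q y' ^ (ρ/(1+ρ))) := by
      rw [← Finset.sum_div]
    rw [this, div_self (hZpos x).ne']
  have hVch : IsChannel V := fun x => ⟨hVnn x, hVsum x⟩
  -- if Q y = 0 (and ρ ≠ 0) then V x y = 0
  have hQ0V : ρ ≠ 0 → ∀ x y, Q y = 0 → V x y = 0 := by
    intro hρne x y hQy
    have hβ : ρ/(1+ρ) ≠ 0 := by positivity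
    rw [hVval, hQy, Real.zero_rpow hβ, mul_zero, zero_div]
  have hvqV : ∀ x y, P x ≠ 0 → 0 < V x y → (ρ = 0 ∨ 0 < Q y) := by
    intro x y _ hVxy
    by_cases hρ0 : ρ = 0
    · exact Or.inl hρ0
    · right
      by_contra hq
      have hQy : Q y = 0 := le_antisymm (not_lt.1 hq) (hQ.1 y)
      rw [hQ0V hρ0 x y hQy] at hVxy
      exact lt_irrefl 0 hVxy
  refine ⟨V, hVch, ?_⟩
  -- Step B : GobjQ P W ρ V Q = Fobj W P ρ Q
  have hB : GobjQ P W ρ V Q = Fobj W P ρ Q := by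
    rw [GobjQ_eq P W ρ V Q hρ hWpos hVnn hQ.1 hvqV, Fobj_alt]
    refine Finset.sum_congr rfl fun x _ => ?_
    congr 2
    have hper : ∀ y, V x y * Real.log (V x y / (W x y ^ (1/(1+ρ)) * Q y ^ (ρ/(1+ρ))))
        = V x y * (-Real.log (∑ y', W x y' ^ (1/(1+ρ)) * Q y' ^ (ρ/(1+ρ)))) := by
      intro y
      rcases (hbnn x y).eq_or_lt with hb0 | hbpos
      · have hv0 : V x y = 0 := by rw [hVval, ← hb0, zero_div]
        rw [hv0, zero_mul, zero_mul]
      · have hdiv : V x y / (W x y ^ (1/(1+ρ)) * Q y ^ (ρ/(1+ρ)))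
            = (∑ y', W x y' ^ (1/(1+ρ)) * Q y' ^ (ρ/(1+ρ)))⁻¹ := by
          rw [hVval, div_right_comm, div_self hbpos.ne', one_div]
        rw [hdiv, Real.log_inv]
    calc ∑ y, V x y * Real.log (V x y / (W x y ^ (1/(1+ρ)) * Q y ^ (ρ/(1+ρ))))
        = ∑ y, V x y * (-Real.log (∑ y', W x y' ^ (1/(1+ρ)) * Q y' ^ (ρ/(1+ρ)))) :=
          Finset.sum_congr rfl fun y _ => hper y
      _ = (∑ y, V x y) * (-Real.log (∑ y', W x y' ^ (1/(1+ρ)) * Q y' ^ (ρ/(1+ρ)))) :=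
          (Finset.sum_mul _ _ _).symm
      _ = -Real.log (∑ y', W x y' ^ (1/(1+ρ)) * Q y' ^ (ρ/(1+ρ))) := by
          rw [hVsum x, one_mul]
  -- Step A : condKL + ρ * mutInf ≤ GobjQ
  have hA : condKL P V W + ρ * mutInf P V ≤ GobjQ P W ρ V Q := by
    unfold GobjQ
    refine add_le_add le_rfl ?_
    rcases hρ.eq_or_lt with hρ0 | hρpos
    · rw [← hρ0, zero_mul, zero_mul]
    · apply mul_le_mul_of_nonneg_left ?_ hρ
      -- mutInf P V ≤ ∑ x, ∑ y, P x * V x y * log (V x y / Q y)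
      set Q2 : Y → ℝ := fun y => ∑ x, P x * V x y with hQ2def
      have hQ2val : ∀ y, Q2 y = ∑ x, P x * V x y := fun y => rfl
      have hQ2nn : ∀ y, 0 ≤ Q2 y := fun y =>
        Finset.sum_nonneg fun x _ => mul_nonneg (hP.1 x) (hVnn x y)
      have hQ2sum : ∑ y, Q2 y = 1 := by
        have h1 : ∀ x, ∑ y, P x * V x y = P x := fun x => by
          rw [← Finset.mul_sum, hVsum x, mul_one]
        calc ∑ y, Q2 y = ∑ x, ∑ y, P x * V x y := Finset.sum_comm
          _ = ∑ x, P x := Finset.sum_congr rfl fun x _ => h1 x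
          _ = 1 := hP.2
      have hsplit : ∀ x y, P x * V x y * Real.log (V x y / Q y)
          = P x * V x y * Real.log (V x y / Q2 y)
            + P x * V x y * Real.log (Q2 y / Q y) := by
        intro x y
        by_cases h : P x * V x y = 0
        · rw [h, zero_mul, zero_mul, zero_mul, add_zero]
        · have hPx : P x ≠ 0 := fun h' => h (by rw [h', zero_mul])
          have hVxy : V x y ≠ 0 := fun h' => h (by rw [h', mul_zero])
          have hVpos : 0 < V x y := (hVnn x y).lt_of_ne (Ne.symm hVxy)
          have hPpos : 0 < P x := (hP.1 x).lt_of_ne (Ne.symm hPx)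
          have hQy : 0 < Q y := by
            rcases hvqV x y hPx hVpos with h' | h'
            · exact absurd h' hρpos.ne'
            · exact h'
          have hQ2y : 0 < Q2 y := by
            have hle : P x * V x y ≤ Q2 y := by
              rw [hQ2val]
              exact Finset.single_le_sum
                (fun i (_ : i ∈ Finset.univ) => mul_nonneg (hP.1 i) (hVnn i y))
                (Finset.mem_univ x)
            nlinarith
          rw [Real.log_div hVpos.ne' hQy.ne', Real.log_div hVpos.ne' hQ2y.ne',
            Real.log_div hQ2y.ne' hQy.ne']
          ring
      have hgibbs : 0 ≤ ∑ y, Q2 y * Real.log (Q2 y / Q y) := by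
        have hvb : ∀ y, Q y = 0 → Q2 y = 0 := by
          intro y hQy
          rw [hQ2val]
          exact Finset.sum_eq_zero fun x _ => by
            rw [hQ0V hρpos.ne' x y hQy, mul_zero]
        have := gibbs Q2 Q hQ2nn hQ2sum hQ.1 hvb (by rw [hQ.2]; norm_num)
        rw [hQ.2, Real.log_one, neg_zero] at this
        exact this
      have heq : ∑ x, ∑ y, P x * V x y * Real.log (V x y / Q y)
          = mutInf P V + ∑ y, Q2 y * Real.log (Q2 y / Q y) := by
        unfold mutInf
        calc ∑ x, ∑ y, P x * V x y * Real.log (V x y / Q y)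
            = ∑ x, ∑ y, (P x * V x y * Real.log (V x y / Q2 y)
                + P x * V x y * Real.log (Q2 y / Q y)) :=
              Finset.sum_congr rfl fun x _ => Finset.sum_congr rfl fun y _ => hsplit x y
          _ = (∑ x, ∑ y, P x * V x y * Real.log (V x y / Q2 y))
                + ∑ x, ∑ y, P x * V x y * Real.log (Q2 y / Q y) := by
              rw [← Finset.sum_add_distrib]
              exact Finset.sum_congr rfl fun x _ => Finset.sum_add_distrib
          _ = (∑ x, ∑ y, P x * V x y * Real.log (V x y / ∑ x', P x' * V x' y))
                + ∑ y, Q2 y * Real.log (Q2 y / Q y) := by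
              congr 1
              rw [Finset.sum_comm]
              refine Finset.sum_congr rfl fun y _ => ?_
              rw [← Finset.sum_mul, ← hQ2val]
        -- done
      rw [heq]
      linarith
  calc condKL P V W + ρ * mutInf P V ≤ GobjQ P W ρ V Q := hA
    _ = Fobj W P ρ Q := hB

/-- for a classical channel `W` with `W(y|x) > 0`, a distribution `P`
and `ρ ≥ 0`, the Gallager-type expression
`min_Q [−(1+ρ) Σ_x P(x) log Σ_y W(y|x)^{1/(1+ρ)} Q(y)^{ρ/(1+ρ)}]` equals
`min_V [D(V‖W|P) + ρ·I(P,V)]`. -/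
theorem E0cc_eq_min_KL_form [Nonempty X] [Nonempty Y]
    (W : X → Y → ℝ) (hW : IsChannel W) (hWpos : ∀ x y, 0 < W x y)
    (P : X → ℝ) (hP : IsProb P) (ρ : ℝ) (hρ : 0 ≤ ρ) :
    (⨅ Q : {Q : Y → ℝ // IsProb Q},
      -(1 + ρ) * ∑ x, P x *
        Real.log (∑ y, W x y ^ (1 / (1 + ρ)) * (Q.1 y) ^ (ρ / (1 + ρ)))) =
    (⨅ V : {V : X → Y → ℝ // IsChannel V},
      condKL P V.1 W + ρ * mutInf P V.1) := by
  haveI : Nonempty {Q : Y → ℝ // IsProb Q} := ⟨⟨_, uniform_isProb⟩⟩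
  haveI : Nonempty {V : X → Y → ℝ // IsChannel V} :=
    ⟨⟨fun _ _ => (Fintype.card Y : ℝ)⁻¹, fun _ => uniform_isProb⟩⟩
  have hFG : (⨅ Q : {Q : Y → ℝ // IsProb Q}, Fobj W P ρ Q.1)
      = ⨅ V : {V : X → Y → ℝ // IsChannel V}, condKL P V.1 W + ρ * mutInf P V.1 := by
    apply le_antisymm
    · refine le_ciInf fun V => ?_
      obtain ⟨Q, hQp, hle⟩ := dir1 W hW hWpos P hP ρ hρ V.1 V.2
      exact ciInf_le_of_le
        ⟨0, by rintro r ⟨Q', rfl⟩; exact Fobj_nonneg W hW P hP ρ hρ Q'.1 Q'.2⟩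
        ⟨Q, hQp⟩ hle
    · refine le_ciInf fun Q => ?_
      obtain ⟨V, hVc, hle⟩ := dir2 W hW hWpos P hP ρ hρ Q.1 Q.2
      refine ciInf_le_of_le ⟨0, ?_⟩ ⟨V, hVc⟩ hle
      rintro r ⟨V', rfl⟩
      show 0 ≤ condKL P V'.1 W + ρ * mutInf P V'.1
      obtain ⟨Q', hQ'p, hle'⟩ := dir1 W hW hWpos P hP ρ hρ V'.1 V'.2
      have := Fobj_nonneg W hW P hP ρ hρ Q' hQ'p
      linarith
  exact hFG
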